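/- arXiv:1912.03653 — 4 statements merged into one kernel-verified Lean document; each statement's English description precedes it below -/
import Mathlib

section
/- Let (S, d) be a pair consisting of an edge subset S and a divisor d on a weighted multigraph G, and let h be a positive polarization divisor of total degree H. Suppose the pair is semistable, i.e., for every proper subset Y of vertices, Σ_{v∈Y} d_v ≤ g(Y \ S) − 1 + (h(Y)/H)(deg d + |S| + 1 − g) + |δ(Y) \ S|. If Y is a proper subset of vertices with δ(Y) ⊆ S, then equality holds in this inequality for both Y and its complement Y^c. -/
open Finset

variable {V E : Type} [Fintype V] [Fintype E] [DecidableEq V] [DecidableEq E]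

/-- Edges with both endpoints in `Y`. -/
def edgesIn (ends : E → V × V) (Y : Finset V) : Finset E :=
  univ.filter fun e => (ends e).1 ∈ Y ∧ (ends e).2 ∈ Y

/-- Edges with exactly one endpoint in `Y` (the cut `δ(Y)`). -/
def cutEdges (ends : E → V × V) (Y : Finset V) : Finset E :=
  univ.filter fun e => Xor ((ends e).1 ∈ Y) ((ends e).2 ∈ Y)

/-- Arithmetic genus of the subgraph induced on `Y` with the edges of `S` removed:
`g(Y \ S) = |E(Y) \ S| - |Y| + 1 + Σ_{v ∈ Y} w v`. -/
def genusOf (ends : E → V × V) (w : V → ℕ) (Y : Finset V) (S : Finset E) : ℤ :=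
  ((edgesIn ends Y) \ S).card - Y.card + 1 + ∑ v ∈ Y, (w v : ℤ)

/-- The right-hand side of the basic inequality for the pair `(S, d)`, the
polarization `h`, and the proper subcurve `Y`:
`g(Y \ S) - 1 + (h(Y)/H)(deg d + |S| + 1 - g) + |δ(Y) \ S|`. -/
def basicBound (ends : E → V × V) (w : V → ℕ) (h : V → ℤ) (S : Finset E) (d : V → ℤ)
    (Y : Finset V) : ℚ :=
  (genusOf ends w Y S : ℚ) - 1
    + ((∑ v ∈ Y, (h v : ℚ)) / (∑ v, (h v : ℚ)))
        * ((∑ v, (d v : ℚ)) + S.card + 1 - (genusOf ends w univ ∅ : ℚ))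
    + ((cutEdges ends Y) \ S).card

/-- The pair `(S, d)` is semistable with respect to the polarization `h`. -/
def Semistable (ends : E → V × V) (w : V → ℕ) (h : V → ℤ) (S : Finset E) (d : V → ℤ) : Prop :=
  ∀ Y : Finset V, Y.Nonempty → Y ≠ univ →
    (∑ v ∈ Y, (d v : ℚ)) ≤ basicBound ends w h S d Y

/-- The pair `(S, d)` is stable with respect to the polarization `h`. -/
def Stable (ends : E → V × V) (w : V → ℕ) (h : V → ℤ) (S : Finset E) (d : V → ℤ) : Prop :=
  ∀ Y : Finset V, Y.Nonempty → Y ≠ univ →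
    (∑ v ∈ Y, (d v : ℚ)) < basicBound ends w h S d Y

/-- Lemma 3.2.  If `(S, d)` is semistable and `Y` is a proper subset of
vertices with `δ(Y) ⊆ S`, then the basic inequality is an equality for both `Y` and its
complement `Y^c`. -/
theorem stmt1 (ends : E → V × V) (w : V → ℕ) (d : V → ℤ) (h : V → ℤ)
    (hpos : ∀ v, 0 < h v) (S : Finset E)
    (hss : Semistable ends w h S d)
    (Y : Finset V) (hYne : Y.Nonempty) (hYproper : Y ≠ univ)
    (hcut : cutEdges ends Y ⊆ S) :
    (∑ v ∈ Y, (d v : ℚ)) = basicBound ends w h S d Y ∧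
    (∑ v ∈ univ \ Y, (d v : ℚ)) = basicBound ends w h S d (univ \ Y) := by
  classical
  have hVne : (univ : Finset V).Nonempty := hYne.mono (subset_univ Y)
  have hH : (0:ℚ) < ∑ v, (h v : ℚ) :=
    Finset.sum_pos (fun v _ => by exact_mod_cast hpos v) hVne
  have hcutc : cutEdges ends (univ \ Y) = cutEdges ends Y := by
    ext e; unfold cutEdges; rw [Finset.mem_filter, Finset.mem_filter]; simp [Xor]; tauto
  have hcut0 : (cutEdges ends Y \ S) = ∅ := Finset.sdiff_eq_empty_iff_subset.mpr hcut
  have hYc_ne : (univ \ Y).Nonempty := by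
    rw [Finset.sdiff_nonempty]
    exact fun hsub => hYproper (le_antisymm (subset_univ Y) hsub)
  have hYc_proper : univ \ Y ≠ univ := by
    intro hE
    obtain ⟨v, hv⟩ := hYne
    have : v ∈ univ \ Y := by rw [hE]; exact mem_univ v
    simp [hv] at this
  have h1 := hss Y hYne hYproper
  have h2 := hss (univ \ Y) hYc_ne hYc_proper
  have hsum : (∑ v ∈ Y, (d v : ℚ)) + ∑ v ∈ univ \ Y, (d v : ℚ) = ∑ v, (d v : ℚ) := by
    rw [add_comm]; exact Finset.sum_sdiff (subset_univ Y)
  have hdisj : Disjoint (edgesIn ends Y \ S) (edgesIn ends (univ \ Y) \ S) := by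
    simp only [Finset.disjoint_left]
    intro e he1 he2
    simp [edgesIn, Finset.mem_sdiff, Finset.mem_filter] at he1 he2
    tauto
  have hunion : (edgesIn ends Y \ S) ∪ (edgesIn ends (univ \ Y) \ S) = univ \ S := by
    ext e
    simp only [Finset.mem_union, Finset.mem_sdiff, edgesIn, Finset.mem_filter, Finset.mem_univ,
      true_and]
    have hnc : e ∉ S → ¬ Xor ((ends e).1 ∈ Y) ((ends e).2 ∈ Y) := by
      intro hns hx
      exact hns (hcut (by simp [cutEdges, hx]))
    unfold Xor at hnc
    tauto
  have hcard : ((edgesIn ends Y \ S).card : ℚ) + ((edgesIn ends (univ \ Y) \ S).card : ℚ)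
      = ((univ \ S : Finset E).card : ℚ) := by
    rw [← hunion, Finset.card_union_of_disjoint hdisj]; push_cast; ring
  have hcardS : ((univ \ S : Finset E).card : ℚ) + (S.card : ℚ)
      = ((univ : Finset E).card : ℚ) := by
    exact_mod_cast congrArg (Nat.cast : ℕ → ℚ)
      (Finset.card_sdiff_add_card_eq_card (subset_univ S))
  have hcardY : (((univ \ Y) : Finset V).card : ℚ) + (Y.card : ℚ)
      = ((univ : Finset V).card : ℚ) := by
    exact_mod_cast congrArg (Nat.cast : ℕ → ℚ)
      (Finset.card_sdiff_add_card_eq_card (subset_univ Y))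
  have hwsum : (∑ v ∈ Y, (w v : ℚ)) + ∑ v ∈ univ \ Y, (w v : ℚ) = ∑ v, (w v : ℚ) := by
    rw [add_comm]; exact Finset.sum_sdiff (subset_univ Y)
  have hhsum : (∑ v ∈ Y, (h v : ℚ)) + ∑ v ∈ univ \ Y, (h v : ℚ) = ∑ v, (h v : ℚ) := by
    rw [add_comm]; exact Finset.sum_sdiff (subset_univ Y)
  have hEuniv : edgesIn ends univ = (univ : Finset E) := by ext e; simp [edgesIn]
  have key : basicBound ends w h S d Y + basicBound ends w h S d (univ \ Y)
      = ∑ v, (d v : ℚ) := by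
    unfold basicBound genusOf
    rw [hcutc, hcut0, hEuniv]
    simp only [Finset.sdiff_empty, Finset.card_empty]
    push_cast
    simp only [Finset.card_univ] at hcardS hcardY ⊢
    field_simp
    linear_combination (∑ v, (h v : ℚ)) * hcard + (∑ v, (h v : ℚ)) * hcardS
      - (∑ v, (h v : ℚ)) * hcardY + (∑ v, (h v : ℚ)) * hwsum + ((∑ v, (d v : ℚ)) + (S.card : ℚ) - (Fintype.card E : ℚ) + (Fintype.card V : ℚ) - ∑ v, (w v : ℚ)) * hhsum
  constructor <;> linarith
end

section
/- If a pair (S, d) on a weighted multigraph G is stable with respect to a positive polarization h (i.e., the basic inequality Σ_{v∈Y} d_v < g(Y \ S) − 1 + (h(Y)/H)(deg d + |S| + 1 − g) + |δ(Y) \ S| is strict for every proper subset Y of vertices), then the graph G − S obtained by deleting the edges in S is connected. -/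
open Finset

variable {V E : Type} [Fintype V] [Fintype E] [DecidableEq V] [DecidableEq E]

/-- The simple graph on the vertices of `G` in which two distinct vertices are adjacent
if some edge of the multigraph lying in `E₀` joins them. -/
def spanGraph (ends : E → V × V) (E₀ : Finset E) : SimpleGraph V where
  Adj u v := u ≠ v ∧ ∃ e ∈ E₀, ends e = (u, v) ∨ ends e = (v, u)
  symm := by
    constructor
    rintro a b ⟨hne, e, he, hor⟩
    exact ⟨hne.symm, e, he, hor.symm⟩
  loopless := by constructor; rintro a ⟨hne, -⟩; exact hne rfl

/-- The underlying simple graph of the multigraph `G - S` obtained by deleting the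
edges in `S`. -/
def graphMinus (ends : E → V × V) (S : Finset E) : SimpleGraph V :=
  spanGraph ends (univ \ S)

/-- Corollary 3.3.  If the pair `(S, d)` is stable with respect to a
positive polarization `h`, then the graph `G - S` obtained by deleting the edges of `S`
is connected. -/
theorem stmt2 [Nonempty V] (ends : E → V × V) (w : V → ℕ) (d : V → ℤ) (h : V → ℤ)
    (hpos : ∀ v, 0 < h v) (S : Finset E)
    (hGconn : (graphMinus ends (∅ : Finset E)).Connected)
    (hst : Stable ends w h S d) :
    (graphMinus ends S).Connected := by
  classical
  by_contra hconn
  rw [SimpleGraph.connected_iff] at hconn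
  push_neg at hconn
  have hnp : ¬ (graphMinus ends S).Preconnected := fun hp => (hconn hp).false (Classical.arbitrary V)
  rw [SimpleGraph.Preconnected] at hnp
  push_neg at hnp
  obtain ⟨u, v, huv⟩ := hnp
  set Y : Finset V := univ.filter (fun x => (graphMinus ends S).Reachable u x) with hYdef
  have huY : u ∈ Y := mem_filter.mpr ⟨mem_univ u, SimpleGraph.Reachable.refl u⟩
  have hvY : v ∉ Y := by simpa [hYdef] using huv
  have hYne : Y.Nonempty := ⟨u, huY⟩
  have hYuniv : Y ≠ univ := fun hh => hvY (hh ▸ mem_univ v)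
  have hYcne : Yᶜ.Nonempty := ⟨v, by simpa using hvY⟩
  have hYcuniv : Yᶜ ≠ univ := by
    intro hh
    have : u ∈ Yᶜ := hh ▸ mem_univ u
    rw [Finset.mem_compl] at this
    exact this huY
  -- the cut of Y lies in S
  have hcut : (cutEdges ends Y) \ S = ∅ := by
    rw [Finset.eq_empty_iff_forall_notMem]
    intro e he
    rw [Finset.mem_sdiff] at he
    obtain ⟨hec, heS⟩ := he
    simp only [cutEdges, mem_filter, mem_univ, true_and] at hec
    have heE : e ∈ (univ : Finset E) \ S := by simp [heS]
    rcases hec with ⟨h1, h2⟩ | ⟨h1, h2⟩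
    · have hne : (ends e).1 ≠ (ends e).2 := fun hq => h2 (hq ▸ h1)
      have hadj : (graphMinus ends S).Adj (ends e).1 (ends e).2 :=
        ⟨hne, e, heE, Or.inl (Prod.mk.eta)⟩
      simp only [hYdef, mem_filter, mem_univ, true_and] at h1 h2
      exact h2 (h1.trans hadj.reachable)
    · have hne : (ends e).2 ≠ (ends e).1 := fun hq => h2 (hq ▸ h1)
      have hadj : (graphMinus ends S).Adj (ends e).2 (ends e).1 :=
        ⟨hne, e, heE, Or.inr (Prod.mk.eta)⟩
      simp only [hYdef, mem_filter, mem_univ, true_and] at h1 h2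
      exact h2 (h1.trans hadj.reachable)
  have hcutc : (cutEdges ends Yᶜ) \ S = ∅ := by
    have : cutEdges ends Yᶜ = cutEdges ends Y := by
      ext e
      simp only [cutEdges, mem_filter, mem_univ, true_and, Finset.mem_compl]
      simp only [Xor]
      tauto
    rw [this, hcut]
  -- counting edges
  have hdisj1 : Disjoint ((edgesIn ends Y) \ S) ((edgesIn ends Yᶜ) \ S) := by
    rw [Finset.disjoint_left]
    intro e h1 h2
    rw [Finset.mem_sdiff] at h1 h2
    simp only [edgesIn, mem_filter, mem_univ, true_and, Finset.mem_compl] at h1 h2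
    exact h2.1.1 h1.1.1
  have hdisj2 : Disjoint (((edgesIn ends Y) \ S) ∪ ((edgesIn ends Yᶜ) \ S)) S := by
    rw [Finset.disjoint_union_left]
    exact ⟨Finset.sdiff_disjoint, Finset.sdiff_disjoint⟩
  have hcount : ((edgesIn ends Y) \ S).card + ((edgesIn ends Yᶜ) \ S).card + S.card
      ≤ Fintype.card E := by
    calc ((edgesIn ends Y) \ S).card + ((edgesIn ends Yᶜ) \ S).card + S.card
        = ((((edgesIn ends Y) \ S) ∪ ((edgesIn ends Yᶜ) \ S)) ∪ S).card := by
          rw [Finset.card_union_of_disjoint hdisj2, Finset.card_union_of_disjoint hdisj1]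
      _ ≤ Fintype.card E := Finset.card_le_univ _
  -- apply stability to Y and Yᶜ
  have h1 := hst Y hYne hYuniv
  have h2 := hst Yᶜ hYcne hYcuniv
  unfold basicBound at h1 h2
  rw [hcut] at h1
  rw [hcutc] at h2
  set D := ∑ x, (d x : ℚ) with hD
  set H := ∑ x, (h x : ℚ) with hH
  set g0 := (genusOf ends w univ ∅ : ℚ) with hg0
  set P := D + (S.card : ℚ) + 1 - g0 with hP
  have hHpos : 0 < H := by
    rw [hH]
    exact Finset.sum_pos (fun x _ => by exact_mod_cast hpos x) univ_nonempty
  have hh : (∑ x ∈ Y, (h x : ℚ)) + ∑ x ∈ Yᶜ, (h x : ℚ) = H :=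
    Finset.sum_add_sum_compl Y _
  have hfrac : (∑ x ∈ Y, (h x : ℚ)) / H + (∑ x ∈ Yᶜ, (h x : ℚ)) / H = 1 := by
    rw [← add_div, hh]
    exact div_self hHpos.ne'
  have hPsum : (∑ x ∈ Y, (h x : ℚ)) / H * P + (∑ x ∈ Yᶜ, (h x : ℚ)) / H * P = P := by
    rw [← add_mul, hfrac, one_mul]
  have hd : (∑ x ∈ Y, (d x : ℚ)) + ∑ x ∈ Yᶜ, (d x : ℚ) = D :=
    Finset.sum_add_sum_compl Y _
  have hQ : g0 < (genusOf ends w Y S : ℚ) + (genusOf ends w Yᶜ S : ℚ) + (S.card : ℚ) - 1 := by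
    have hadd := add_lt_add h1 h2
    rw [hd] at hadd
    simp only [Finset.card_empty, Nat.cast_zero] at hadd
    linarith [hadd, hPsum]
  have hZ : genusOf ends w univ ∅ <
      genusOf ends w Y S + genusOf ends w Yᶜ S + (S.card : ℤ) - 1 := by
    rw [hg0] at hQ
    exact_mod_cast hQ
  have hcV : (Y.card : ℤ) + (Yᶜ.card : ℤ) = (Fintype.card V : ℤ) := by
    exact_mod_cast Finset.card_add_card_compl Y
  have hw : (∑ x ∈ Y, (w x : ℤ)) + ∑ x ∈ Yᶜ, (w x : ℤ) = ∑ x, (w x : ℤ) :=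
    Finset.sum_add_sum_compl Y _
  have hEuniv : ((edgesIn ends univ \ (∅ : Finset E)).card : ℤ) = (Fintype.card E : ℤ) := by
    simp [edgesIn]
  have hcountZ : (((edgesIn ends Y) \ S).card : ℤ) + (((edgesIn ends Yᶜ) \ S).card : ℤ)
      + (S.card : ℤ) ≤ (Fintype.card E : ℤ) := by exact_mod_cast hcount
  simp only [genusOf] at hZ
  rw [hEuniv] at hZ
  rw [Finset.card_univ] at hZ
  linarith [hZ, hcV, hw, hcountZ]
end

section
/- Let G be a weighted multigraph of genus g, S ⊆ E(G), and d a divisor on G with deg d + |S| = g. The pair (S, d) is stable with respect to any positive polarization h (i.e., for every proper subset Y of vertices, Σ_{v∈Y} d_v ≤ g(Y \ S) − 1 + h(Y)/H + |δ(Y)\S| holds strictly) if and only if for every proper subset Y of vertices, g(Y^c \ S) ≤ Σ_{w∈Y^c} d_w. -/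
open Finset

variable {V E : Type} [Fintype V] [Fintype E] [DecidableEq V] [DecidableEq E]

lemma edge_partition (ends : E → V × V) (Y : Finset V) (S : Finset E) :
    ((edgesIn ends Y) \ S).card + ((edgesIn ends (univ \ Y)) \ S).card
      + ((cutEdges ends Y) \ S).card + S.card = Fintype.card E := by
  classical
  have h1 : (edgesIn ends Y) \ S
      = univ.filter (fun e => ((ends e).1 ∈ Y ∧ (ends e).2 ∈ Y) ∧ e ∉ S) := by
    rw [edgesIn, sdiff_eq_filter, filter_filter]
  have h2 : (edgesIn ends (univ \ Y)) \ S
      = univ.filter (fun e => ((ends e).1 ∉ Y ∧ (ends e).2 ∉ Y) ∧ e ∉ S) := by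
    rw [edgesIn, sdiff_eq_filter, filter_filter]
    simp [mem_sdiff]
  have h3 : (cutEdges ends Y) \ S
      = univ.filter (fun e => (Xor ((ends e).1 ∈ Y) ((ends e).2 ∈ Y)) ∧ e ∉ S) := by
    rw [cutEdges, sdiff_eq_filter, filter_filter]
  have h4 : S = univ.filter (fun e => e ∈ S) := by simp
  have h4' : S.card = (univ.filter (fun e => e ∈ S)).card := by rw [← h4]
  rw [h1, h2, h3, h4']
  rw [card_filter, card_filter, card_filter, card_filter,
    ← Finset.sum_add_distrib, ← Finset.sum_add_distrib, ← Finset.sum_add_distrib]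
  rw [← card_univ, card_eq_sum_ones]
  apply Finset.sum_congr rfl
  intro e _
  by_cases ha : (ends e).1 ∈ Y <;> by_cases hb : (ends e).2 ∈ Y <;>
    by_cases hs : e ∈ S <;> simp [Xor', ha, hb, hs]

lemma genus_compl (ends : E → V × V) (w : V → ℕ) (Y : Finset V) (S : Finset E) :
    genusOf ends w Y S + genusOf ends w (univ \ Y) S
      + ((cutEdges ends Y) \ S).card + S.card = genusOf ends w univ ∅ + 1 := by
  classical
  have hE := edge_partition ends Y S
  have hEu : edgesIn ends univ = (univ : Finset E) := by
    simp [edgesIn]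
  have hV : Y.card + (univ \ Y).card = Fintype.card V := by
    rw [card_sdiff_of_subset (subset_univ Y), card_univ]
    have := Finset.card_le_card (subset_univ Y)
    rw [card_univ] at this
    omega
  have hw : ∑ v ∈ Y, (w v : ℤ) + ∑ v ∈ univ \ Y, (w v : ℤ) = ∑ v, (w v : ℤ) := by
    rw [add_comm, Finset.sum_sdiff (subset_univ Y)]
  unfold genusOf
  rw [hEu, sdiff_empty]
  simp only [card_univ]
  zify at hE hV
  linarith

/-- In degree `g`, the pair `(S, d)` is stable (the basic inequality,
which in degree `g` reads `Σ_{v∈Y} d_v < g(Y \ S) - 1 + h(Y)/H + |δ(Y) \ S|`, is strict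
for every proper subset `Y` of vertices) if and only if `g(Y^c \ S) ≤ Σ_{w ∈ Y^c} d_w`
for every proper subset `Y` of vertices. -/
theorem stmt4 (ends : E → V × V) (w : V → ℕ) (d : V → ℤ) (h : V → ℤ)
    (hpos : ∀ v, 0 < h v) (S : Finset E)
    (hdeg : (∑ v, d v) + S.card = genusOf ends w univ ∅) :
    (∀ Y : Finset V, Y.Nonempty → Y ≠ univ →
        (∑ v ∈ Y, (d v : ℚ)) < (genusOf ends w Y S : ℚ) - 1
          + (∑ v ∈ Y, (h v : ℚ)) / (∑ v, (h v : ℚ))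
          + ((cutEdges ends Y) \ S).card)
      ↔ (∀ Y : Finset V, Y.Nonempty → Y ≠ univ →
        genusOf ends w (univ \ Y) S ≤ ∑ v ∈ univ \ Y, d v) := by
  classical
  refine forall_congr' fun Y => forall_congr' fun hY => forall_congr' fun hYu => ?_
  -- positivity facts about the polarization
  have hHtot : 0 < ∑ v, (h v : ℚ) := by
    apply Finset.sum_pos (fun i _ => by exact_mod_cast hpos i)
    exact ⟨hY.choose, mem_univ _⟩
  have hYpos : 0 < ∑ v ∈ Y, (h v : ℚ) :=
    Finset.sum_pos (fun i _ => by exact_mod_cast hpos i) hY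
  have hc : (univ \ Y).Nonempty := by
    rw [sdiff_nonempty]
    intro hsub
    exact hYu (univ_subset_iff.mp hsub)
  obtain ⟨x, hx⟩ := hc
  rw [mem_sdiff] at hx
  have hH' : ∑ v ∈ Y, (h v : ℚ) < ∑ v, (h v : ℚ) := by
    refine Finset.sum_lt_sum_of_subset (subset_univ Y) (mem_univ x) hx.2 ?_ ?_
    · exact_mod_cast hpos x
    · intro j _ _; exact le_of_lt (by exact_mod_cast hpos j)
  have ht0 : 0 < (∑ v ∈ Y, (h v : ℚ)) / (∑ v, (h v : ℚ)) := div_pos hYpos hHtot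
  have ht1 : (∑ v ∈ Y, (h v : ℚ)) / (∑ v, (h v : ℚ)) < 1 := (div_lt_one hHtot).2 hH'
  have key := genus_compl ends w Y S
  have hsplit : ∑ v ∈ Y, d v + ∑ v ∈ univ \ Y, d v = ∑ v, d v := by
    rw [add_comm, Finset.sum_sdiff (subset_univ Y)]
  have hcastY : (∑ v ∈ Y, (d v : ℚ)) = ((∑ v ∈ Y, d v : ℤ) : ℚ) := by push_cast; ring
  -- the strict rational inequality is equivalent to an integer inequality
  have hiff : ((∑ v ∈ Y, (d v : ℚ)) < (genusOf ends w Y S : ℚ) - 1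
      + (∑ v ∈ Y, (h v : ℚ)) / (∑ v, (h v : ℚ)) + ((cutEdges ends Y) \ S).card)
      ↔ (∑ v ∈ Y, d v) ≤ genusOf ends w Y S - 1 + ((cutEdges ends Y) \ S).card := by
    constructor
    · intro hlt
      have : ((∑ v ∈ Y, d v : ℤ) : ℚ)
          < ((genusOf ends w Y S + ((cutEdges ends Y) \ S).card : ℤ) : ℚ) := by
        rw [← hcastY]; push_cast; linarith
      have h' : (∑ v ∈ Y, d v) < genusOf ends w Y S + ((cutEdges ends Y) \ S).card := by
        exact_mod_cast this
      omega
    · intro hle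
      have : ((∑ v ∈ Y, d v : ℤ) : ℚ)
          ≤ ((genusOf ends w Y S - 1 + ((cutEdges ends Y) \ S).card : ℤ) : ℚ) := by
        exact_mod_cast hle
      rw [← hcastY] at this
      push_cast at this
      linarith
  rw [hiff]
  omega
end

section
/- If a pair (S, d) is v-quasistable with respect to a positive polarization h and fixed vertex v, then the graph G − S is connected. -/
open Finset

variable {V E : Type} [Fintype V] [Fintype E] [DecidableEq V] [DecidableEq E]

/-- The pair `(S, d)` is `v`-quasistable with respect to `(h, v)`: it is semistable and
whenever equality holds in the basic inequality for a proper subset `Y`, `v ∉ Y`. -/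
def Quasistable (ends : E → V × V) (w : V → ℕ) (h : V → ℤ) (v : V)
    (S : Finset E) (d : V → ℤ) : Prop :=
  Semistable ends w h S d ∧
    ∀ Y : Finset V, Y.Nonempty → Y ≠ univ →
      (∑ u ∈ Y, (d u : ℚ)) = basicBound ends w h S d Y → v ∉ Y


lemma cutEdges_compl' (ends : E → V × V) (Y : Finset V) :
    cutEdges ends Yᶜ = cutEdges ends Y := by
  ext e
  simp only [cutEdges, mem_filter, mem_univ, true_and, Finset.mem_compl]
  simp only [Xor]
  tauto

lemma edges_partition' (ends : E → V × V) (Y : Finset V) (S : Finset E)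
    (hcut : cutEdges ends Y ⊆ S) :
    (edgesIn ends Y \ S).card + (edgesIn ends Yᶜ \ S).card = (univ \ S : Finset E).card := by
  rw [← Finset.card_union_of_disjoint]
  · congr 1
    ext e
    simp only [Finset.mem_union, Finset.mem_sdiff, edgesIn, mem_filter, mem_univ, true_and,
      Finset.mem_compl]
    constructor
    · rintro (⟨_, hs⟩ | ⟨_, hs⟩) <;> exact hs
    · intro hs
      by_cases h1 : (ends e).1 ∈ Y <;> by_cases h2 : (ends e).2 ∈ Y
      · exact Or.inl ⟨⟨h1, h2⟩, hs⟩
      · exact absurd (hcut (by rw [cutEdges, mem_filter]; simp [Xor, h1, h2])) hs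
      · exact absurd (hcut (by rw [cutEdges, mem_filter]; simp [Xor, h1, h2])) hs
      · exact Or.inr ⟨⟨h1, h2⟩, hs⟩
  · rw [Finset.disjoint_left]
    intro e he he'
    simp only [edgesIn, mem_filter, mem_univ, true_and, Finset.mem_compl, Finset.mem_sdiff]
      at he he'
    exact he'.1.1 he.1.1

lemma genus_sum' (ends : E → V × V) (w : V → ℕ) (Y : Finset V) (S : Finset E)
    (hcut : cutEdges ends Y ⊆ S) :
    genusOf ends w Y S + genusOf ends w Yᶜ S = genusOf ends w univ ∅ + 1 - S.card := by
  have h1 := edges_partition' ends Y S hcut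
  have h2 : Y.card + Yᶜ.card = Fintype.card V := Finset.card_add_card_compl Y
  have h3 : ∑ v ∈ Y, (w v : ℤ) + ∑ v ∈ Yᶜ, (w v : ℤ) = ∑ v, (w v : ℤ) :=
    Finset.sum_add_sum_compl Y _
  have hS : S.card ≤ Fintype.card E := by simpa using Finset.card_le_card (subset_univ S)
  have h4 : (univ \ S : Finset E).card = Fintype.card E - S.card := by
    rw [card_sdiff_of_subset (subset_univ S), card_univ]
  have h5 : edgesIn ends (univ : Finset V) = (univ : Finset E) := by simp [edgesIn]
  rw [h4] at h1
  simp only [genusOf, h5, sdiff_empty, card_univ]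
  zify [hS] at h1
  zify at h2
  push_cast
  linarith [h3]

lemma bound_sum' (ends : E → V × V) (w : V → ℕ) (h : V → ℤ) (S : Finset E) (d : V → ℤ)
    (Y : Finset V) (hH : (∑ v, (h v : ℚ)) ≠ 0)
    (hcut : cutEdges ends Y ⊆ S) :
    basicBound ends w h S d Y + basicBound ends w h S d Yᶜ = ∑ v, (d v : ℚ) := by
  have hc1 : cutEdges ends Y \ S = ∅ := Finset.sdiff_eq_empty_iff_subset.2 hcut
  have hc2 : cutEdges ends Yᶜ \ S = ∅ := by rw [cutEdges_compl' ends Y]; exact hc1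
  have hdiv : (∑ v ∈ Y, (h v : ℚ)) / (∑ v, (h v : ℚ))
      + (∑ v ∈ Yᶜ, (h v : ℚ)) / (∑ v, (h v : ℚ)) = 1 := by
    rw [← add_div, Finset.sum_add_sum_compl, div_self hH]
  have hg : ((genusOf ends w Y S : ℚ)) + ((genusOf ends w Yᶜ S : ℚ))
      = (genusOf ends w univ ∅ : ℚ) + 1 - S.card := by
    exact_mod_cast genus_sum' ends w Y S hcut
  simp only [basicBound, hc1, hc2, card_empty, Nat.cast_zero, add_zero]
  linear_combination hg + ((∑ v, (d v : ℚ)) + S.card + 1 - (genusOf ends w univ ∅ : ℚ)) * hdiv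


/-- If `(S, d)` is `v`-quasistable with respect to a positive
polarization `h` and a fixed vertex `v`, then the graph `G - S` is connected. -/
theorem stmt8 [Nonempty V] (ends : E → V × V) (w : V → ℕ) (d : V → ℤ) (h : V → ℤ)
    (hpos : ∀ u, 0 < h u) (v : V) (S : Finset E)
    (hGconn : (graphMinus ends (∅ : Finset E)).Connected)
    (hqs : Quasistable ends w h v S d) :
    (graphMinus ends S).Connected := by
  classical
  by_contra hnc
  have hne : Nonempty V := inferInstance
  rw [SimpleGraph.connected_iff] at hnc
  have hpre : ¬ (graphMinus ends S).Preconnected := fun hp => hnc ⟨hp, hne⟩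
  unfold SimpleGraph.Preconnected at hpre
  push_neg at hpre
  obtain ⟨u, u', huu'⟩ := hpre
  set Y : Finset V := univ.filter fun x => (graphMinus ends S).Reachable u x with hY
  have hu : u ∈ Y := by simp only [hY, mem_filter, mem_univ, true_and]; exact SimpleGraph.Reachable.refl u
  have hu' : u' ∉ Y := by simp [hY, huu']
  have hclosed : ∀ a b, a ∈ Y → (graphMinus ends S).Adj a b → b ∈ Y := by
    intro a b ha hab
    simp only [hY, mem_filter, mem_univ, true_and] at ha ⊢
    exact ha.trans hab.reachable
  have hcut : cutEdges ends Y ⊆ S := by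
    intro e he
    by_contra hes
    simp only [cutEdges, mem_filter, mem_univ, true_and] at he
    simp only [Xor] at he
    have hadj : ∀ a b : V, a ∈ Y → b ∉ Y →
        (ends e = (a, b) ∨ ends e = (b, a)) → False := by
      intro a b ha hb hor
      refine hb (hclosed a b ha ⟨?_, e, ?_, hor⟩)
      · rintro rfl; exact hb ha
      · simp [hes]
    rcases he with ⟨h1, h2⟩ | ⟨h1, h2⟩
    · exact hadj _ _ h1 h2 (Or.inl rfl)
    · exact hadj _ _ h1 h2 (Or.inr rfl)
  have hYne : Y.Nonempty := ⟨u, hu⟩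
  have hYu : Y ≠ univ := fun hEq => hu' (hEq ▸ mem_univ u')
  have hYcne : (Yᶜ : Finset V).Nonempty := ⟨u', Finset.mem_compl.2 hu'⟩
  have hYcu : (Yᶜ : Finset V) ≠ univ := fun hEq => (Finset.mem_compl.1 (hEq ▸ mem_univ u)) hu
  have hH : (∑ x, (h x : ℚ)) ≠ 0 := by
    have : (0 : ℚ) < ∑ x, (h x : ℚ) :=
      Finset.sum_pos (fun i _ => by exact_mod_cast hpos i) univ_nonempty
    exact ne_of_gt this
  have hb := bound_sum' ends w h S d Y hH hcut
  have hd : (∑ x ∈ Y, (d x : ℚ)) + ∑ x ∈ Yᶜ, (d x : ℚ) = ∑ x, (d x : ℚ) :=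
    Finset.sum_add_sum_compl Y _
  have s1 := hqs.1 Y hYne hYu
  have s2 := hqs.1 Yᶜ hYcne hYcu
  have e1 : (∑ x ∈ Y, (d x : ℚ)) = basicBound ends w h S d Y := by linarith
  have e2 : (∑ x ∈ Yᶜ, (d x : ℚ)) = basicBound ends w h S d Yᶜ := by linarith
  have v1 := hqs.2 Y hYne hYu e1
  have v2 := hqs.2 Yᶜ hYcne hYcu e2
  exact v2 (Finset.mem_compl.2 v1)
end
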